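/- Let G and H be groups equipped with an action of G on H by automorphisms, and let η : G → H be a bijective 1-cocycle whose inverse η⁻¹ : H → G is also a 1-cocycle with respect to an action of H on G by automorphisms. If U ≤ G is a subgroup stable under the action of H, then η(U) is a subgroup of H stable under the action of G. -/

import Mathlib

theorem cocycle_image_subgroup {G H : Type*} [Group G] [Group H]
    (ωG : G →* MulAut H) (ωH : H →* MulAut G) (η : G ≃ H)
    (hη : ∀ g₁ g₂ : G, η (g₁ * g₂) = η g₁ * (ωG g₁) (η g₂))
    (hη' : ∀ h₁ h₂ : H, η.symm (h₁ * h₂) = η.symm h₁ * (ωH h₁) (η.symm h₂))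
    (U : Subgroup G) (hU : ∀ h : H, ∀ u ∈ U, (ωH h) u ∈ U) :
    ∃ K : Subgroup H, (K : Set H) = ⇑η '' (U : Set G) ∧
      ∀ g : G, ∀ x ∈ K, (ωG g) x ∈ K := by
  have hsymm1 : η.symm 1 = 1 := by
    have h := hη' 1 1
    simp only [mul_one, map_one, MulAut.one_apply] at h
    exact left_eq_mul.mp h
  have hinv : ∀ x : H, η.symm x⁻¹ = (ωH x⁻¹) (η.symm x)⁻¹ := by
    intro x
    have h1 : η.symm x * (ωH x) (η.symm x⁻¹) = 1 := by
      rw [← hη' x x⁻¹, mul_inv_cancel, hsymm1]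
    have h2 : (ωH x) (η.symm x⁻¹) = (η.symm x)⁻¹ := eq_inv_of_mul_eq_one_right h1
    have h3 : η.symm x⁻¹ = (ωH x).symm (η.symm x)⁻¹ := by
      rw [← h2, MulEquiv.symm_apply_apply]
    rw [h3, map_inv ωH x]
    rfl
  refine ⟨{ carrier := {h : H | η.symm h ∈ U}
            one_mem' := by simpa [hsymm1] using U.one_mem
            mul_mem' := by
              intro a b ha hb
              simp only [Set.mem_setOf_eq] at *
              rw [hη' a b]
              exact U.mul_mem ha (hU a _ hb)
            inv_mem' := by
              intro a ha
              simp only [Set.mem_setOf_eq] at *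
              rw [hinv a]
              exact hU _ _ (U.inv_mem ha) }, ?_, ?_⟩
  · ext h
    simp only [Subgroup.coe_set_mk, Set.mem_setOf_eq, Set.mem_image, SetLike.mem_coe]
    constructor
    · intro hh
      exact ⟨η.symm h, hh, η.apply_symm_apply h⟩
    · rintro ⟨u, hu, rfl⟩
      show η.symm (η u) ∈ U
      rwa [η.symm_apply_apply]
  · intro g x hx
    simp only [Subgroup.mem_mk, Set.mem_setOf_eq] at *
    have h1 : η (g * η.symm x) = η g * (ωG g) x := by
      rw [hη g (η.symm x), η.apply_symm_apply]
    have h2 : g * η.symm x = η.symm (η g * (ωG g) x) := by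
      rw [← h1, η.symm_apply_apply]
    rw [hη' (η g) ((ωG g) x), η.symm_apply_apply] at h2
    have h4 := mul_left_cancel h2
    have h3 : η.symm ((ωG g) x) = (ωH (η g)).symm (η.symm x) := by
      rw [h4, MulEquiv.symm_apply_apply]
    have h5 : (ωH (η g)).symm (η.symm x) = (ωH (η g)⁻¹) (η.symm x) := by
      rw [map_inv]; rfl
    show η.symm ((ωG g) x) ∈ U
    rw [h3, h5]
    exact hU _ _ hx
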